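/- Let h : R^m → R be Lipschitz continuous, with distribution function H_F having bounded density h_F, and let J be a bounded function with J(t) = 0 for t outside [α,β] ⊂ (0,1) such that ∫_{−∞}^∞ |J(H_F(y))| dy < ∞, and let a_1,…,a_d be constants, p_1,…,p_d ∈ (0,1) with h_F(H_F^{−1}(p_i)) > 0. Then the kernel A(x_1,…,x_m) = −∫_{−∞}^∞ (1_{[h(x_1,…,x_m) ≤ y]} − H_F(y)) J(H_F(y)) dy + Σ_{i=1}^d a_i (p_i − 1_{[h(x_1,…,x_m) ≤ H_F^{−1}(p_i)]}) / h_F(H_F^{−1}(p_i)) satisfies the L_2-variation condition: there exist L' and ε_0 > 0 such that for all ε ∈ (0,ε_0), E( sup_{‖(x_1,…,x_m)−(X_1',…,X_m')‖ ≤ ε} |A(x_1,…,x_m) − A(X_1',…,X_m')| )² ≤ L'ε. -/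

import Mathlib

open MeasureTheory ProbabilityTheory Filter Topology

attribute [local instance 10] Classical.propDecidable

noncomputable section

/-- Euclidean distance on `Fin m → ℝ`. -/
def eudist {m : ℕ} (x y : Fin m → ℝ) : ℝ := Real.sqrt (∑ i, (x i - y i) ^ 2)

/-- The product measure `ν^⊗m`, the law of `m` independent copies. -/
def piNu (m : ℕ) (ν : Measure ℝ) : Measure (Fin m → ℝ) := Measure.pi fun _ => ν

/-- Generalized inverse (quantile function) of a distribution function. -/
def qf (F : ℝ → ℝ) (t : ℝ) : ℝ := sInf {x : ℝ | t ≤ F x}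

/-- The U-distribution function `H_F(t) = P(h(Y_1,…,Y_m) ≤ t)` for iid `Y_i` with law `ν`. -/
def HFk (m : ℕ) (h : (Fin m → ℝ) → ℝ) (ν : Measure ℝ) (t : ℝ) : ℝ :=
  ((piNu m ν) {y | h y ≤ t}).toReal

/-- The kernel `A` appearing in the linearization of a GL-statistic. -/
def Aker (m : ℕ) (h : (Fin m → ℝ) → ℝ) (ν : Measure ℝ) (J : ℝ → ℝ)
    (d : ℕ) (aa pp : Fin d → ℝ) (hF : ℝ → ℝ) (x : Fin m → ℝ) : ℝ :=
  -(∫ y : ℝ, ((if h x ≤ y then (1 : ℝ) else 0) - HFk m h ν y) * J (HFk m h ν y)) +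
    ∑ i, aa i * (pp i - if h x ≤ qf (HFk m h ν) (pp i) then 1 else 0)
      / hF (qf (HFk m h ν) (pp i))

lemma eudist_nonneg' {m : ℕ} (x y : Fin m → ℝ) : 0 ≤ eudist x y := Real.sqrt_nonneg _

lemma eudist_self' {m : ℕ} (y : Fin m → ℝ) : eudist y y = 0 := by
  simp [eudist]

lemma eudist_le_sqrt_mul {m : ℕ} (x y : Fin m → ℝ) :
    eudist x y ≤ Real.sqrt m * dist x y := by
  rw [eudist, ← Real.sqrt_sq dist_nonneg, ← Real.sqrt_mul (by positivity)]
  apply Real.sqrt_le_sqrt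
  calc ∑ i, (x i - y i)^2 ≤ ∑ _i : Fin m, dist x y ^ 2 := by
        refine Finset.sum_le_sum fun i _ => ?_
        have h1 : |x i - y i| ≤ dist x y := by
          rw [← Real.dist_eq]; exact dist_le_pi_dist x y i
        calc (x i - y i)^2 = |x i - y i|^2 := (sq_abs _).symm
          _ ≤ dist x y ^ 2 := pow_le_pow_left₀ (abs_nonneg _) h1 2
    _ = m * dist x y ^ 2 := by simp [Finset.sum_const, nsmul_eq_mul]

lemma measurable_of_lip {m : ℕ} {h : (Fin m → ℝ) → ℝ} {K : ℝ}
    (hLip : ∀ x y, |h x - h y| ≤ K * eudist x y) : Measurable h := by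
  have hK : ∀ x y, |h x - h y| ≤ (max K 0 + 1) * eudist x y := fun x y =>
    (hLip x y).trans (by
      have := eudist_nonneg' x y
      nlinarith [le_max_left K 0, le_max_right K 0])
  have hcont : Continuous h := by
    have : LipschitzWith (Real.toNNReal ((max K 0 + 1) * Real.sqrt m)) h := by
      rw [lipschitzWith_iff_dist_le_mul]
      intro x y
      rw [Real.dist_eq]
      refine (hK x y).trans ?_
      have h2 : eudist x y ≤ Real.sqrt m * dist x y := eudist_le_sqrt_mul x y
      have h3 : (0:ℝ) ≤ max K 0 + 1 := by positivity
      calc (max K 0 + 1) * eudist x y ≤ (max K 0 + 1) * (Real.sqrt m * dist x y) :=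
            mul_le_mul_of_nonneg_left h2 h3
        _ = ((max K 0 + 1) * Real.sqrt m) * dist x y := by ring
        _ ≤ (Real.toNNReal ((max K 0 + 1) * Real.sqrt m) : ℝ) * dist x y :=
            mul_le_mul_of_nonneg_right (Real.le_coe_toNNReal _) dist_nonneg
    exact this.continuous
  exact hcont.measurable

instance piNu_prob (m : ℕ) (ν : Measure ℝ) [IsProbabilityMeasure ν] :
    IsProbabilityMeasure (piNu m ν) := by
  unfold piNu; infer_instance

lemma HFk_nonneg (m : ℕ) (h : (Fin m → ℝ) → ℝ) (ν : Measure ℝ) (t : ℝ) :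
    0 ≤ HFk m h ν t := ENNReal.toReal_nonneg

lemma HFk_le_one (m : ℕ) (h : (Fin m → ℝ) → ℝ) (ν : Measure ℝ) [IsProbabilityMeasure ν] (t : ℝ) :
    HFk m h ν t ≤ 1 := by
  unfold HFk
  exact ENNReal.toReal_le_of_le_ofReal one_pos.le (by simpa using prob_le_one)

lemma HFk_mono (m : ℕ) (h : (Fin m → ℝ) → ℝ) (ν : Measure ℝ) [IsProbabilityMeasure ν] :
    Monotone (HFk m h ν) := by
  intro a b hab
  unfold HFk
  exact ENNReal.toReal_mono (measure_ne_top _ _)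
    (measure_mono fun y hy => le_trans hy hab)

lemma HFk_measurable (m : ℕ) (h : (Fin m → ℝ) → ℝ) (ν : Measure ℝ) [IsProbabilityMeasure ν] :
    Measurable (HFk m h ν) := (HFk_mono m h ν).measurable

/-- Density bound: increments of `HFk` are controlled by the bound on the density. -/
lemma HFk_incr_le (m : ℕ) (h : (Fin m → ℝ) → ℝ) (ν : Measure ℝ) [IsProbabilityMeasure ν]
    (hF : ℝ → ℝ) (hdens : ∀ t, HFk m h ν t = ∫ x in Set.Iic t, hF x)
    (D' : ℝ) (hD'0 : 0 ≤ D') (hD' : ∀ x, hF x ≤ D')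
    {a b : ℝ} (hab : a ≤ b) :
    HFk m h ν b - HFk m h ν a ≤ D' * (b - a) := by
  by_cases hint : IntegrableOn hF (Set.Iic b) volume
  · have hia : IntegrableOn hF (Set.Iic a) volume := hint.mono_set (Set.Iic_subset_Iic.2 hab)
    have hio : IntegrableOn hF (Set.Ioc a b) volume := hint.mono_set (Set.Ioc_subset_Iic_self)
    have hsplit : ∫ x in Set.Iic b, hF x = (∫ x in Set.Iic a, hF x) + ∫ x in Set.Ioc a b, hF x := by
      rw [← setIntegral_union (Set.Iic_disjoint_Ioc le_rfl) measurableSet_Ioc hia hio,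
        Set.Iic_union_Ioc_eq_Iic hab]
    have hfin : volume (Set.Ioc a b) < ⊤ := by simp [Real.volume_Ioc]
    have hmono : ∫ x in Set.Ioc a b, hF x ≤ ∫ x in Set.Ioc a b, D' :=
      integral_mono hio (integrableOn_const hfin.ne) fun x => hD' x
    have hconst : ∫ _x in Set.Ioc a b, D' = D' * (b - a) := by
      simp [Real.volume_Ioc, ENNReal.toReal_ofReal (sub_nonneg.2 hab), mul_comm, hab]
    rw [hdens a, hdens b, hsplit]
    linarith
  · have hb0 : HFk m h ν b = 0 := by
      rw [hdens b, integral_undef hint]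
    have := HFk_nonneg m h ν a
    nlinarith

lemma tail_bound (m : ℕ) (h : (Fin m → ℝ) → ℝ) (hmeas : Measurable h)
    (ν : Measure ℝ) [IsProbabilityMeasure ν] (q r : ℝ) (hr : 0 < r) :
    ((piNu m ν) {y | |h y - q| ≤ r}).toReal ≤ HFk m h ν (q + r) - HFk m h ν (q - 2*r) := by
  set μ := piNu m ν
  have hB : MeasurableSet {y | h y ≤ q - 2*r} := measurableSet_le hmeas measurable_const
  have hsub : {y | |h y - q| ≤ r} ⊆ {y | h y ≤ q + r} \ {y | h y ≤ q - 2*r} := by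
    intro y hy
    rw [Set.mem_setOf_eq, abs_le] at hy
    constructor
    · simp only [Set.mem_setOf_eq]; linarith [hy.2]
    · simp only [Set.mem_setOf_eq, not_le]; linarith [hy.1]
  have hBA : {y | h y ≤ q - 2*r} ⊆ {y | h y ≤ q + r} := fun y hy => by
    simp only [Set.mem_setOf_eq] at *; linarith
  have hdiff : μ ({y | h y ≤ q + r} \ {y | h y ≤ q - 2*r})
      = μ {y | h y ≤ q + r} - μ {y | h y ≤ q - 2*r} :=
    measure_diff hBA hB.nullMeasurableSet (measure_ne_top _ _)
  calc (μ {y | |h y - q| ≤ r}).toReal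
      ≤ (μ ({y | h y ≤ q + r} \ {y | h y ≤ q - 2*r})).toReal :=
        ENNReal.toReal_mono (measure_ne_top _ _) (measure_mono hsub)
    _ = HFk m h ν (q + r) - HFk m h ν (q - 2*r) := by
        rw [hdiff, ENNReal.toReal_sub_of_le (measure_mono hBA) (measure_ne_top _ _)]
        rfl

set_option maxHeartbeats 2000000 in
/-- the kernel `A` of the GL-linearization satisfies the
L₂-variation condition. -/
theorem stmt_15
    (m : ℕ) (hm : 2 ≤ m)
    (h : (Fin m → ℝ) → ℝ)
    (ν : Measure ℝ) [IsProbabilityMeasure ν]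
    -- `h` Lipschitz continuous
    (K : ℝ) (hLip : ∀ x y, |h x - h y| ≤ K * eudist x y)
    -- `H_F` has a bounded density `h_F`
    (hF : ℝ → ℝ) (hFmeas : Measurable hF)
    (hdens : ∀ t, HFk m h ν t = ∫ x in Set.Iic t, hF x)
    (hFbdd : ∃ D, ∀ x, hF x ≤ D)
    -- `J` bounded, vanishing outside `[α,β] ⊂ (0,1)`, with `∫ |J(H_F(y))| dy < ∞`
    (J : ℝ → ℝ) (α β : ℝ) (hα : 0 < α) (hαβ : α < β) (hβ1 : β < 1)
    (hJ0 : ∀ t, t ∉ Set.Icc α β → J t = 0)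
    (hJbdd : ∃ M, ∀ t, |J t| ≤ M)
    (hJint : Integrable (fun y : ℝ => J (HFk m h ν y)))
    -- quantile part parameters with `h_F(H_F⁻¹(p_i)) > 0`
    (d : ℕ) (aa pp : Fin d → ℝ) (hpp : ∀ i, pp i ∈ Set.Ioo (0:ℝ) 1)
    (hFq : ∀ i, 0 < hF (qf (HFk m h ν) (pp i))) :
    ∃ L' ε₀ : ℝ, 0 < ε₀ ∧ ∀ ε ∈ Set.Ioo (0 : ℝ) ε₀,
      ∫ y : Fin m → ℝ,
        (⨆ x ∈ {x : Fin m → ℝ | eudist x y ≤ ε},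
          |Aker m h ν J d aa pp hF x - Aker m h ν J d aa pp hF y|) ^ 2 ∂piNu m ν
        ≤ L' * ε := by
  classical
  obtain ⟨D, hD⟩ := hFbdd
  obtain ⟨M, hM⟩ := hJbdd
  have hmeas : Measurable h := measurable_of_lip hLip
  set μ := piNu m ν with hμdef
  set A := Aker m h ν J d aa pp hF with hAdef
  set HF := HFk m h ν with hHFdef
  set K' : ℝ := max K 0 + 1 with hK'def
  have hK'pos : 0 < K' := by positivity
  have hLip' : ∀ x y, |h x - h y| ≤ K' * eudist x y := fun x y =>
    (hLip x y).trans (by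
      have := eudist_nonneg' x y
      rw [hK'def]
      nlinarith [le_max_left K 0, le_max_right K 0])
  set M' : ℝ := max M 0 with hM'def
  have hM'0 : 0 ≤ M' := le_max_right _ _
  have hM' : ∀ t, |J t| ≤ M' := fun t => (hM t).trans (le_max_left _ _)
  set D' : ℝ := max D 0 with hD'def
  have hD'0 : 0 ≤ D' := le_max_right _ _
  have hD' : ∀ x, hF x ≤ D' := fun x => (hD x).trans (le_max_left _ _)
  set q : Fin d → ℝ := fun i => qf HF (pp i) with hqdef
  set c : Fin d → ℝ := fun i => |aa i| / hF (q i) with hcdef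
  have hc0 : ∀ i, 0 ≤ c i := fun i => div_nonneg (abs_nonneg _) (hFq i).le
  set C : ℝ := ∑ i, c i with hCdef
  have hC0 : 0 ≤ C := Finset.sum_nonneg fun i _ => hc0 i
  refine ⟨M'^2*K'^2 + (2*M'*K' + C) * (3*C*D'*K'), 1, one_pos, ?_⟩
  rintro ε ⟨hε0, hε1⟩
  -- the integrand of `A` is integrable
  have hfint : ∀ z : Fin m → ℝ,
      Integrable (fun t => ((if h z ≤ t then (1:ℝ) else 0) - HF t) * J (HF t)) := by
    intro z
    have hmeas1 : Measurable fun t => ((if h z ≤ t then (1:ℝ) else 0) - HF t) := by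
      refine Measurable.sub ?_ (HFk_measurable m h ν)
      exact Measurable.ite (measurableSet_le measurable_const measurable_id)
        measurable_const measurable_const
    refine hJint.mono (hmeas1.aestronglyMeasurable.mul hJint.1) (ae_of_all _ fun t => ?_)
    rw [Real.norm_eq_abs, Real.norm_eq_abs, abs_mul]
    have h1 : |(if h z ≤ t then (1:ℝ) else 0) - HF t| ≤ 1 := by
      have h2 := HFk_nonneg m h ν t
      have h3 := HFk_le_one m h ν t
      rw [abs_le]; constructor <;> [skip; skip] <;> split_ifs <;> simp only [← hHFdef] at * <;> linarith
    calc |(if h z ≤ t then (1:ℝ) else 0) - HF t| * |J (HF t)| ≤ 1 * |J (HF t)| :=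
          mul_le_mul_of_nonneg_right h1 (abs_nonneg _)
      _ = |J (HF t)| := one_mul _
  -- key pointwise estimate
  set Bf : (Fin m → ℝ) → ℝ :=
    fun y => ∑ i, c i * (if |h y - q i| ≤ K' * ε then 1 else 0) with hBfdef
  have hBf0 : ∀ y, 0 ≤ Bf y := fun y =>
    Finset.sum_nonneg fun i _ => mul_nonneg (hc0 i) (by split_ifs <;> norm_num)
  have hBfC : ∀ y, Bf y ≤ C := fun y => by
    rw [hCdef, hBfdef]
    refine Finset.sum_le_sum fun i _ => ?_
    have := hc0 i
    split_ifs <;> nlinarith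
  have key : ∀ y x, eudist x y ≤ ε → |A x - A y| ≤ M' * K' * ε + Bf y := by
    intro y x hxy
    have hhd : |h x - h y| ≤ K' * ε :=
      (hLip' x y).trans (mul_le_mul_of_nonneg_left hxy hK'pos.le)
    have hsplit : A x - A y =
        ((∫ t : ℝ, ((if h y ≤ t then (1:ℝ) else 0) - HF t) * J (HF t)) -
         (∫ t : ℝ, ((if h x ≤ t then (1:ℝ) else 0) - HF t) * J (HF t))) +
        ((∑ i, aa i * (pp i - if h x ≤ q i then 1 else 0) / hF (q i)) -
         (∑ i, aa i * (pp i - if h y ≤ q i then 1 else 0) / hF (q i))) := by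
      simp only [hAdef, Aker, ← hHFdef, ← hqdef]
      ring
    rw [hsplit]
    have part1 : |(∫ t : ℝ, ((if h y ≤ t then (1:ℝ) else 0) - HF t) * J (HF t)) -
         (∫ t : ℝ, ((if h x ≤ t then (1:ℝ) else 0) - HF t) * J (HF t))| ≤ M' * K' * ε := by
      rw [← integral_sub (hfint y) (hfint x)]
      have hbd : ∀ t : ℝ,
          ‖(((if h y ≤ t then (1:ℝ) else 0) - HF t) * J (HF t)) -
            (((if h x ≤ t then (1:ℝ) else 0) - HF t) * J (HF t))‖ ≤
          (Set.Ico (min (h x) (h y)) (max (h x) (h y))).indicator (fun _ => M') t := by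
        intro t
        by_cases ht : t ∈ Set.Ico (min (h x) (h y)) (max (h x) (h y))
        · rw [Set.indicator_of_mem ht]
          have h1 : |(if h y ≤ t then (1:ℝ) else 0) - (if h x ≤ t then 1 else 0)| ≤ 1 := by
            split_ifs <;> norm_num
          calc ‖(((if h y ≤ t then (1:ℝ) else 0) - HF t) * J (HF t)) -
                (((if h x ≤ t then (1:ℝ) else 0) - HF t) * J (HF t))‖
              = |(if h y ≤ t then (1:ℝ) else 0) - (if h x ≤ t then 1 else 0)| * |J (HF t)| := by
                rw [Real.norm_eq_abs, ← abs_mul]; ring_nf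
            _ ≤ 1 * M' := mul_le_mul h1 (hM' _) (abs_nonneg _) one_pos.le
            _ = M' := one_mul _
        · rw [Set.indicator_of_notMem ht]
          rw [Set.mem_Ico, not_and_or, not_le, not_lt] at ht
          have heq : (if h y ≤ t then (1:ℝ) else 0) = (if h x ≤ t then 1 else 0) := by
            rcases ht with ht | ht
            · rw [lt_min_iff] at ht
              rw [if_neg (not_le.2 ht.2), if_neg (not_le.2 ht.1)]
            · rw [max_le_iff] at ht
              rw [if_pos ht.2, if_pos ht.1]
          rw [heq]
          simp
      have hIco : Integrable ((Set.Ico (min (h x) (h y)) (max (h x) (h y))).indicator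
          (fun _ => M')) := by
        rw [integrable_indicator_iff measurableSet_Ico]
        exact integrableOn_const (by simp [Real.volume_Ico])
      calc |∫ t : ℝ, ((((if h y ≤ t then (1:ℝ) else 0) - HF t) * J (HF t)) -
              (((if h x ≤ t then (1:ℝ) else 0) - HF t) * J (HF t)))|
          ≤ ∫ t : ℝ, (Set.Ico (min (h x) (h y)) (max (h x) (h y))).indicator (fun _ => M') t := by
            rw [← Real.norm_eq_abs]
            exact norm_integral_le_of_norm_le hIco (ae_of_all _ hbd)
        _ = M' * (max (h x) (h y) - min (h x) (h y)) := by
            rw [integral_indicator_const _ measurableSet_Ico]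
            simp [Real.volume_Ico, ENNReal.toReal_ofReal (sub_nonneg.2 (min_le_max)), mul_comm]
        _ = M' * |h x - h y| := by rw [max_sub_min_eq_abs, abs_sub_comm]
        _ ≤ M' * (K' * ε) := mul_le_mul_of_nonneg_left hhd hM'0
        _ = M' * K' * ε := by ring
    have part2 : |(∑ i, aa i * (pp i - if h x ≤ q i then 1 else 0) / hF (q i)) -
         (∑ i, aa i * (pp i - if h y ≤ q i then 1 else 0) / hF (q i))| ≤ Bf y := by
      rw [← Finset.sum_sub_distrib]
      refine (Finset.abs_sum_le_sum_abs _ _).trans ?_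
      rw [hBfdef]
      refine Finset.sum_le_sum fun i _ => ?_
      have hterm : aa i * (pp i - if h x ≤ q i then 1 else 0) / hF (q i) -
          aa i * (pp i - if h y ≤ q i then 1 else 0) / hF (q i) =
          aa i * ((if h y ≤ q i then (1:ℝ) else 0) - (if h x ≤ q i then 1 else 0)) / hF (q i) := by
        ring
      rw [hterm, abs_div, abs_mul, abs_of_pos (hFq i)]
      have hind : |(if h y ≤ q i then (1:ℝ) else 0) - (if h x ≤ q i then 1 else 0)| ≤
          (if |h y - q i| ≤ K' * ε then 1 else 0) := by
        by_cases hc : |h y - q i| ≤ K' * ε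
        · rw [if_pos hc]; split_ifs <;> norm_num
        · rw [if_neg hc]
          rw [not_le] at hc
          have heq : (if h y ≤ q i then (1:ℝ) else 0) = (if h x ≤ q i then 1 else 0) := by
            by_cases hy : h y ≤ q i
            · have : q i - h y > K' * ε := by
                rw [abs_of_nonpos (by linarith)] at hc; linarith
              have hx : h x ≤ q i := by
                have := abs_le.1 hhd
                linarith [this.1, this.2]
              rw [if_pos hy, if_pos hx]
            · have : h y - q i > K' * ε := by
                rw [abs_of_pos (by push_neg at hy; linarith)] at hc; linarith
              have hx : ¬ h x ≤ q i := by
                have := abs_le.1 hhd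
                push_neg; linarith [this.1, this.2]
              rw [if_neg hy, if_neg hx]
          rw [heq, sub_self, abs_zero]
      calc |aa i| * |(if h y ≤ q i then (1:ℝ) else 0) - (if h x ≤ q i then 1 else 0)| / hF (q i)
          ≤ |aa i| * (if |h y - q i| ≤ K' * ε then 1 else 0) / hF (q i) := by
            exact (div_le_div_iff_of_pos_right (hFq i)).2 (mul_le_mul_of_nonneg_left hind (abs_nonneg _))
        _ = c i * (if |h y - q i| ≤ K' * ε then 1 else 0) := by
            rw [hcdef]; ring
    calc |_ + _| ≤ _ + _ := abs_add_le _ _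
      _ ≤ M' * K' * ε + Bf y := add_le_add part1 part2
  -- supremum bounds
  have supb : ∀ y, (⨆ x ∈ {x : Fin m → ℝ | eudist x y ≤ ε}, |A x - A y|) ≤ M' * K' * ε + Bf y := by
    intro y
    have hnn : 0 ≤ M' * K' * ε + Bf y := add_nonneg (by positivity) (hBf0 y)
    exact Real.iSup_le (fun x => Real.iSup_le (fun hx => key y x hx) hnn) hnn
  have sup0 : ∀ y, 0 ≤ ⨆ x ∈ {x : Fin m → ℝ | eudist x y ≤ ε}, |A x - A y| := by
    intro y
    have hnn : 0 ≤ M' * K' * ε + Bf y := add_nonneg (by positivity) (hBf0 y)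
    have hbdd : BddAbove (Set.range fun x =>
        ⨆ (_ : x ∈ {x : Fin m → ℝ | eudist x y ≤ ε}), |A x - A y|) := by
      refine ⟨M' * K' * ε + Bf y, ?_⟩
      rintro _ ⟨x, rfl⟩
      exact Real.iSup_le (fun hx => key y x hx) hnn
    have hy : y ∈ {x : Fin m → ℝ | eudist x y ≤ ε} := by
      simp only [Set.mem_setOf_eq, eudist_self']; exact hε0.le
    have h0 := le_ciSup hbdd y
    rwa [ciSup_pos hy, sub_self, abs_zero] at h0
  -- measurability / integrability of the bound
  have hSmeas : ∀ i : Fin d, MeasurableSet {y : Fin m → ℝ | |h y - q i| ≤ K' * ε} :=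
    fun i => measurableSet_le (hmeas.sub measurable_const).abs measurable_const
  have hBfmeas : Measurable Bf := by
    refine Finset.measurable_sum _ fun i _ => ?_
    exact measurable_const.mul (Measurable.ite (hSmeas i) measurable_const measurable_const)
  have hBfint : Integrable Bf μ := by
    refine Integrable.mono' (integrable_const C) hBfmeas.aestronglyMeasurable
      (ae_of_all _ fun y => ?_)
    rw [Real.norm_eq_abs, abs_of_nonneg (hBf0 y)]
    exact hBfC y
  have hg2int : Integrable (fun y => (M' * K' * ε + Bf y)^2) μ := by
    refine Integrable.mono' (integrable_const ((M' * K' + C)^2))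
      ((measurable_const.add hBfmeas).pow_const 2).aestronglyMeasurable (ae_of_all _ fun y => ?_)
    rw [Real.norm_eq_abs, abs_of_nonneg (sq_nonneg _)]
    have h1 : M' * K' * ε + Bf y ≤ M' * K' + C := by
      have h2 := hBfC y
      nlinarith [mul_nonneg hM'0 hK'pos.le]
    exact pow_le_pow_left₀ (add_nonneg (by positivity) (hBf0 y)) h1 2
  -- the integral of the indicator bound
  have hBfint_le : ∫ y, Bf y ∂μ ≤ C * (3 * D' * K' * ε) := by
    have hKe : 0 < K' * ε := mul_pos hK'pos hε0
    have h1 : ∫ y, Bf y ∂μ = ∑ i, c i * (μ {y | |h y - q i| ≤ K' * ε}).toReal := by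
      rw [hBfdef, integral_finset_sum]
      · refine Finset.sum_congr rfl fun i _ => ?_
        rw [integral_const_mul _ _]
        congr 1
        have hind : (fun y : Fin m → ℝ => if |h y - q i| ≤ K' * ε then (1:ℝ) else 0) =
            ({y : Fin m → ℝ | |h y - q i| ≤ K' * ε}).indicator 1 := by
          ext y; simp [Set.indicator_apply]
        rw [hind, integral_indicator_one (hSmeas i)]; rfl
      · intro i _
        refine Integrable.mono' (integrable_const (c i))
          (measurable_const.mul (Measurable.ite (hSmeas i) measurable_const
            measurable_const)).aestronglyMeasurable (ae_of_all _ fun y => ?_)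
        rw [Real.norm_eq_abs]
        have := hc0 i
        split_ifs <;> simp [abs_of_nonneg, this]
    rw [h1, hCdef, Finset.sum_mul]
    refine Finset.sum_le_sum fun i _ => ?_
    have htail := tail_bound m h hmeas ν (q i) (K' * ε) hKe
    have hincr := HFk_incr_le m h ν hF hdens D' hD'0 hD'
      (a := q i - 2*(K'*ε)) (b := q i + K' * ε) (by linarith)
    have hPi : (μ {y | |h y - q i| ≤ K' * ε}).toReal ≤ D' * (3 * (K' * ε)) := by
      calc (μ {y | |h y - q i| ≤ K' * ε}).toReal
          ≤ HFk m h ν (q i + K' * ε) - HFk m h ν (q i - 2*(K'*ε)) := htail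
        _ ≤ D' * ((q i + K' * ε) - (q i - 2*(K'*ε))) := hincr
        _ = D' * (3 * (K' * ε)) := by ring
    calc c i * (μ {y | |h y - q i| ≤ K' * ε}).toReal
        ≤ c i * (D' * (3 * (K' * ε))) := mul_le_mul_of_nonneg_left hPi (hc0 i)
      _ = c i * (3 * D' * K' * ε) := by ring
  -- conclude
  calc ∫ y, (⨆ x ∈ {x : Fin m → ℝ | eudist x y ≤ ε}, |A x - A y|)^2 ∂μ
      ≤ ∫ y, (M' * K' * ε + Bf y)^2 ∂μ := by
        refine integral_mono_of_nonneg (ae_of_all _ fun y => sq_nonneg _) hg2int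
          (ae_of_all _ fun y => ?_)
        exact pow_le_pow_left₀ (sup0 y) (supb y) 2
    _ ≤ ∫ y, ((M' * K' * ε)^2 + (2 * (M' * K' * ε) + C) * Bf y) ∂μ := by
        refine integral_mono hg2int ((integrable_const _).add (hBfint.const_mul _)) fun y => ?_
        have h1 := hBf0 y
        have h2 := hBfC y
        nlinarith
    _ = (M' * K' * ε)^2 + (2 * (M' * K' * ε) + C) * ∫ y, Bf y ∂μ := by
        rw [integral_add (integrable_const _) (hBfint.const_mul _), integral_const,
          integral_const_mul _ _]
        simp [measure_univ, Measure.real]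
    _ ≤ (M'^2*K'^2 + (2*M'*K' + C) * (3*C*D'*K')) * ε := by
        have h3 : 0 ≤ ∫ y, Bf y ∂μ := integral_nonneg hBf0
        have e1 : (M' * K' * ε)^2 ≤ M'^2*K'^2*ε := by
          nlinarith [mul_nonneg hM'0 hK'pos.le]
        have e0 : 0 ≤ 2 * (M' * K' * ε) + C := by positivity
        have e0' : 2 * (M' * K' * ε) + C ≤ 2*M'*K' + C := by
          nlinarith [mul_nonneg hM'0 hK'pos.le]
        have e2 : (2 * (M' * K' * ε) + C) * ∫ y, Bf y ∂μ
            ≤ (2*M'*K' + C) * (C * (3 * D' * K' * ε)) := by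
          have := mul_le_mul e0' hBfint_le h3 (by nlinarith [mul_nonneg hM'0 hK'pos.le, hC0])
          linarith
        nlinarith [e1, e2]
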